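/- Consider a latent class model with M latent classes, and let I be a nonempty subset of items such that: (i) for each item j ∈ I, the set {p_{jα} : α = 1,…,M} of conditional response distribution vectors contains exactly two distinct elements; and (ii) for every pair of distinct classes α₁ ≠ α₂ there exists an item j ∈ I with p_{jα₁} ≠ p_{jα₂}. Then the T-matrix T_I has full column rank M; that is, its M columns are linearly independent vectors in ℝ^{Π_{j∈I} k_j}. -/

import Mathlib

lemma dual_exists {n : ℕ} (a : Fin n → ℝ) (S : Set (Fin n → ℝ)) (ha : a ∈ S)
    (h2 : S.ncard = 2) (hsum : ∀ v ∈ S, ∑ y, v y = 1) :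
    ∃ φ : Fin n → ℝ, ∀ v ∈ S, ∑ y, φ y * v y = if v = a then 1 else 0 := by
  obtain ⟨u, w, huw, rfl⟩ := Set.ncard_eq_two.mp h2
  obtain ⟨q, hq, hmem⟩ : ∃ q, q ≠ a ∧ ({u, w} : Set (Fin n → ℝ)) = {a, q} := by
    rcases ha with rfl | rfl
    · exact ⟨w, fun h => huw h.symm, rfl⟩
    · exact ⟨u, huw, by rw [Set.pair_comm]⟩
  obtain ⟨y₀, hy₀⟩ := Function.ne_iff.mp (Ne.symm hq)
  set D := a y₀ - q y₀ with hD
  have hD0 : D ≠ 0 := sub_ne_zero.mpr hy₀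
  refine ⟨fun y => ((if y = y₀ then 1 else 0) - q y₀) / D, ?_⟩
  intro v hv
  have hv1 : ∑ y, v y = 1 := hsum v hv
  have key : ∑ y, ((if y = y₀ then (1:ℝ) else 0) - q y₀) / D * v y
      = (v y₀ - q y₀) / D := by
    have : ∀ y, ((if y = y₀ then (1:ℝ) else 0) - q y₀) / D * v y
        = ((if y = y₀ then v y else 0) - q y₀ * v y) / D := by
      intro y; by_cases h : y = y₀ <;> simp [h] <;> ring
    rw [Finset.sum_congr rfl (fun y _ => this y), ← Finset.sum_div,
      Finset.sum_sub_distrib, Finset.sum_ite_eq' Finset.univ y₀ v,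
      ← Finset.mul_sum, hv1]
    simp
  rw [key]
  by_cases hva : v = a
  · subst hva; rw [if_pos rfl]; field_simp; exact hD.symm
  · rw [if_neg hva]
    have : v = q := by
      rw [hmem] at hv
      rcases hv with rfl | rfl
      · exact absurd rfl hva
      · rfl
    rw [this]; simp

/-- **Full column rank of the T-matrix of a set of two-valued items.**
There are `M` latent classes; item `j` takes values in `{1,…,c j}` with conditional
response distribution `p j α` (a probability vector) for class `α`. Let `I` be a nonempty
subset of the items such that (i) for each `j ∈ I` the set `{p j α : α}` has exactly two
distinct elements, and (ii) for every pair of distinct classes some item `j ∈ I`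
separates them (`p j α₁ ≠ p j α₂`). Then the T-matrix `T_I` — rows indexed by response
patterns on `I`, columns indexed by classes, entry `∏_{j ∈ I} p_{jα}^{y^j}` — has full
column rank `M`: its `M` columns are linearly independent. -/
theorem Tmatrix_full_column_rank_of_two_valued_items
    (M J : ℕ) (c : Fin J → ℕ)
    (p : (j : Fin J) → Fin M → Fin (c j) → ℝ)
    (hp0 : ∀ j α y, 0 ≤ p j α y) (hp1 : ∀ j α, ∑ y, p j α y = 1)
    (I : Finset (Fin J)) (hI : I.Nonempty)
    (htwo : ∀ j ∈ I, (Set.range (fun α : Fin M => p j α)).ncard = 2)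
    (hsep : ∀ α₁ α₂ : Fin M, α₁ ≠ α₂ → ∃ j ∈ I, p j α₁ ≠ p j α₂) :
    LinearIndependent ℝ
      (fun α : Fin M =>
        (fun y : ((j : I) → Fin (c j.1)) => ∏ j, p j.1 α (y j))) := by
  rw [Fintype.linearIndependent_iff]
  intro g hg α
  -- build dual functionals for each item
  have hdual : ∀ j : I, ∃ φ : Fin (c j.1) → ℝ,
      ∀ β : Fin M, ∑ y, φ y * p j.1 β y = if p j.1 β = p j.1 α then 1 else 0 := by
    intro j
    obtain ⟨φ, hφ⟩ := dual_exists (p j.1 α) (Set.range (fun β : Fin M => p j.1 β))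
      ⟨α, rfl⟩ (htwo j.1 j.2) (by rintro v ⟨β, rfl⟩; exact hp1 j.1 β)
    exact ⟨φ, fun β => hφ (p j.1 β) ⟨β, rfl⟩⟩
  choose φ hφ using hdual
  -- the tensor dual picks out column α
  have key : ∀ β : Fin M,
      ∑ y : ((j : I) → Fin (c j.1)), (∏ j, φ j (y j)) * ∏ j, p j.1 β (y j)
        = if β = α then 1 else 0 := by
    intro β
    have h1 : ∀ y : ((j : I) → Fin (c j.1)),
        (∏ j, φ j (y j)) * ∏ j, p j.1 β (y j) = ∏ j, (φ j (y j) * p j.1 β (y j)) := by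
      intro y; rw [Finset.prod_mul_distrib]
    rw [Finset.sum_congr rfl (fun y _ => h1 y)]
    have h2 : (∏ j : I, ∑ z, φ j z * p j.1 β z)
        = ∑ y : ((j : I) → Fin (c j.1)), ∏ j, (φ j (y j) * p j.1 β (y j)) := by
      rw [Finset.prod_univ_sum]
      rw [Fintype.piFinset_univ]
    rw [← h2]
    by_cases hβ : β = α
    · subst hβ
      rw [if_pos rfl]
      apply Finset.prod_eq_one
      intro j _
      rw [hφ j β, if_pos rfl]
    · rw [if_neg hβ]
      obtain ⟨j, hjI, hj⟩ := hsep β α hβ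
      apply Finset.prod_eq_zero (Finset.mem_univ (⟨j, hjI⟩ : I))
      rw [hφ ⟨j, hjI⟩ β, if_neg hj]
  -- evaluate the dependence relation against the tensor dual
  have hzero : ∀ y : ((j : I) → Fin (c j.1)),
      ∑ β, g β * ∏ j, p j.1 β (y j) = 0 := by
    intro y
    have := congrFun hg y
    simpa [Finset.sum_apply] using this
  have : (0:ℝ) = ∑ β, g β * (if β = α then 1 else 0) := by
    calc (0:ℝ) = ∑ y : ((j : I) → Fin (c j.1)), (∏ j, φ j (y j)) * 0 := by simp
    _ = ∑ y : ((j : I) → Fin (c j.1)), (∏ j, φ j (y j))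
          * ∑ β, g β * ∏ j, p j.1 β (y j) := by
        exact Finset.sum_congr rfl (fun y _ => by rw [hzero y])
    _ = ∑ y : ((j : I) → Fin (c j.1)), ∑ β, g β
          * ((∏ j, φ j (y j)) * ∏ j, p j.1 β (y j)) := by
        exact Finset.sum_congr rfl (fun y _ => by rw [Finset.mul_sum]; exact Finset.sum_congr rfl (fun β _ => by ring))
    _ = ∑ β, g β * ∑ y : ((j : I) → Fin (c j.1)),
          (∏ j, φ j (y j)) * ∏ j, p j.1 β (y j) := by
        rw [Finset.sum_comm]
        exact Finset.sum_congr rfl (fun β _ => by rw [Finset.mul_sum])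
    _ = ∑ β, g β * (if β = α then 1 else 0) := by
        exact Finset.sum_congr rfl (fun β _ => by rw [key β])
  simpa using this.symm
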